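/- Let f ∈ ℂ[x,y] be a homogeneous polynomial of degree d > 1. Then the following are equivalent: (i) for every g ∈ ℂ[x,y] and every k ≥ 1, if f^k·g ∈ D_f then g ∈ D_f (i.e. the Brieskorn module B(f) = ℂ[x,y]/D_f is torsion free over ℂ[t], where t acts by multiplication by f); (ii) the only common zero of f_x and f_y in ℂ² is the origin (i.e. f has an isolated singularity at 0). -/

import Mathlib

open MvPolynomial

/-- Membership in `D_f = {f_x·∂g/∂y − f_y·∂g/∂x : g ∈ ℂ[x,y]}`. -/
def Dmem (f w : MvPolynomial (Fin 2) ℂ) : Prop :=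
  ∃ g : MvPolynomial (Fin 2) ℂ,
    w = pderiv 0 f * pderiv 1 g - pderiv 1 f * pderiv 0 g

namespace Brisk

noncomputable section

abbrev Rc := MvPolynomial (Fin 2) ℂ

/-! ### Generalities -/

lemma deg2 (t : Fin 2 →₀ ℕ) : t.degree = t 0 + t 1 := by
  rw [Finsupp.degree_apply, Finset.sum_subset (Finset.subset_univ _)
    (by simp [Finsupp.notMem_support_iff]), Fin.sum_univ_two]

lemma degsum {f : Rc} {d : ℕ} (hf : f.IsHomogeneous d) {s : Fin 2 →₀ ℕ} (hs : coeff s f ≠ 0) :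
    s 0 + s 1 = d := by
  have := hf hs
  rw [Finsupp.weight_apply] at this
  simpa [Finsupp.sum_fintype, Fin.sum_univ_two] using this

lemma X_mul_pderiv_monomial (i : Fin 2) (s : Fin 2 →₀ ℕ) (a : ℂ) :
    X i * pderiv i (monomial s a) = (s i : ℂ) • monomial s a := by
  rw [pderiv_monomial]
  rcases Nat.eq_zero_or_pos (s i) with h | h
  · simp [h]
  · rw [X, monomial_mul, smul_monomial]
    congr 1
    · rw [add_comm, tsub_add_cancel_of_le]
      exact Finsupp.single_le_iff.2 h
    · simp [smul_eq_mul, mul_comm]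

lemma euler {f : Rc} {d : ℕ} (hf : f.IsHomogeneous d) :
    X 0 * pderiv 0 f + X 1 * pderiv 1 f = C (d : ℂ) * f := by
  rw [← smul_eq_C_mul]
  conv_lhs => rw [f.as_sum]
  rw [map_sum, map_sum, Finset.mul_sum, Finset.mul_sum, ← Finset.sum_add_distrib]
  conv_rhs => rw [f.as_sum, Finset.smul_sum]
  refine Finset.sum_congr rfl fun s hs => ?_
  rw [X_mul_pderiv_monomial, X_mul_pderiv_monomial, ← add_smul, ← Nat.cast_add,
    degsum hf (mem_support_iff.mp hs)]

lemma pderiv_isHomogeneous {f : Rc} {d : ℕ} (hf : f.IsHomogeneous d) (i : Fin 2) :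
    (pderiv i f).IsHomogeneous (d - 1) := by
  conv in f => rw [f.as_sum]
  rw [map_sum]
  apply IsHomogeneous.sum
  intro s hs
  rw [pderiv_monomial]
  rcases Nat.eq_zero_or_pos (s i) with h | h
  · simp only [h, Nat.cast_zero, mul_zero, map_zero]
    exact isHomogeneous_zero _ _ _
  · apply isHomogeneous_monomial
    have hd := degsum hf (mem_support_iff.mp hs)
    rw [deg2]
    simp only [Finsupp.tsub_apply]
    fin_cases i <;>
      simp only [Fin.zero_eta, Fin.mk_one, Finsupp.single_apply] at h hd ⊢ <;>
      simp [Finsupp.single_apply] <;> omega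

lemma eval_smul_homog {f : Rc} {d : ℕ} (hf : f.IsHomogeneous d) (c : ℂ) (p : Fin 2 → ℂ) :
    eval (c • p) f = c ^ d * eval p f := by
  conv_lhs => rw [f.as_sum]
  conv_rhs => rw [f.as_sum]
  rw [map_sum, map_sum, Finset.mul_sum]
  refine Finset.sum_congr rfl fun s hs => ?_
  rw [eval_monomial, eval_monomial]
  have h1 : ∀ q : Fin 2 → ℂ, (s.prod fun i k => q i ^ k) = q 0 ^ s 0 * q 1 ^ s 1 := by
    intro q
    rw [Finsupp.prod_fintype _ _ (fun i => pow_zero (q i)), Fin.prod_univ_two]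
  rw [h1, h1]
  simp only [Pi.smul_apply, smul_eq_mul]
  rw [mul_pow, mul_pow, ← degsum hf (mem_support_iff.mp hs), pow_add]
  ring

lemma pderiv_pderiv_X (i j : Fin 2) (n : Fin 2) :
    pderiv i (pderiv j (X n : Rc)) = 0 := by
  fin_cases j <;> fin_cases n <;> simp [pderiv_X_self, pderiv_X_of_ne]

lemma pderiv_comm (h : Rc) : pderiv 0 (pderiv 1 h) = pderiv 1 (pderiv 0 h) := by
  induction h using MvPolynomial.induction_on with
  | C a => simp
  | add p q hp hq => simp [hp, hq]
  | mul_X p n hp =>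
      simp only [pderiv_mul, map_add, pderiv_mul, hp, pderiv_pderiv_X]
      ring


lemma eval_fin1 (c : MvPolynomial (Fin 1) ℂ) (x : Fin 1 → ℂ) :
    eval x c = eval (fun _ => x 0) c := by
  have hx : x = fun _ => x 0 := funext fun i => by rw [Subsingleton.elim i (0 : Fin 1)]
  rw [← hx]

/-- a nonzero polynomial in one variable admits a point `t ≠ 0` where it does not vanish -/
lemma exists_ne_zero_eval (c : MvPolynomial (Fin 1) ℂ) (hc : c ≠ 0) :
    ∃ t : ℂ, t ≠ 0 ∧ eval (fun _ => t) c ≠ 0 := by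
  have hcx : c * X 0 ≠ 0 := mul_ne_zero hc (X_ne_zero 0)
  have : ¬ ∀ x : Fin 1 → ℂ, eval x (c * X 0) = eval x 0 := by
    intro hall
    exact hcx (MvPolynomial.funext hall)
  push_neg at this
  obtain ⟨x, hx⟩ := this
  refine ⟨x 0, ?_, ?_⟩
  · intro h0
    apply hx; rw [map_mul, eval_X, h0, mul_zero, map_zero]
  · intro h0
    apply hx
    rw [map_mul, map_zero, eval_fin1, h0, zero_mul]

/-- a polynomial with positive degree in the first variable has a nonzero root -/
lemma exists_root_of_degreeOf0 {q : Rc} (hq : 1 ≤ degreeOf 0 q) :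
    ∃ p : Fin 2 → ℂ, p ≠ 0 ∧ eval p q = 0 := by
  set Q := finSuccEquiv ℂ 1 q with hQ
  have hdeg : Q.natDegree = degreeOf 0 q := natDegree_finSuccEquiv q
  have hq0 : q ≠ 0 := by
    intro h; rw [h] at hq; simp [degreeOf_zero] at hq
  have hQ0 : Q ≠ 0 := by
    intro h
    exact hq0 ((map_eq_zero_iff _ (finSuccEquiv ℂ 1).injective).1 h)
  obtain ⟨t, ht0, htc⟩ := exists_ne_zero_eval Q.leadingCoeff (Polynomial.leadingCoeff_ne_zero.2 hQ0)
  set Q' := Q.map (eval (fun _ => t) : MvPolynomial (Fin 1) ℂ →+* ℂ) with hQ'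
  have hdeg' : Q'.natDegree = Q.natDegree :=
    Polynomial.natDegree_map_of_leadingCoeff_ne_zero _ htc
  have hdpos' : 0 < Q'.degree := Polynomial.natDegree_pos_iff_degree_pos.1 (by omega)
  obtain ⟨s, hs⟩ := Complex.exists_root hdpos'
  refine ⟨Fin.cons s (fun _ => t), ?_, ?_⟩
  · intro h
    have := congrFun h 1
    simp only [Pi.zero_apply] at this
    rw [show (1 : Fin 2) = Fin.succ 0 from rfl, Fin.cons_succ] at this
    exact ht0 this
  · rw [eval_eq_eval_mv_eval']
    exact hs

lemma eq_C_of_totalDegree_eq_zero {q : Rc} (hq : q.totalDegree = 0) : q = C (coeff 0 q) := by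
  ext m
  rcases eq_or_ne m 0 with rfl | hm
  · simp
  · rw [coeff_C, if_neg (Ne.symm hm)]
    by_contra hcm
    obtain ⟨i, hi⟩ : ∃ i, m i ≠ 0 := by
      by_contra hall; push_neg at hall
      exact hm (Finsupp.ext hall)
    exact hi (((totalDegree_eq_zero_iff _ q).1 hq) m (mem_support_iff.2 hcm) i)

/-- Every nonconstant polynomial in `ℂ[x,y]` has a zero away from the origin. -/
lemma exists_nonzero_root {q : Rc} (hq : 1 ≤ q.totalDegree) :
    ∃ p : Fin 2 → ℂ, p ≠ 0 ∧ eval p q = 0 := by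
  by_cases h0 : 1 ≤ degreeOf 0 q
  · exact exists_root_of_degreeOf0 h0
  · have h1 : 1 ≤ degreeOf 1 q := by
      by_contra h1
      push_neg at h0 h1
      have hz : q.totalDegree = 0 := by
        rw [totalDegree_eq_zero_iff]
        intro m hm x
        have hm0 : m 0 ≤ degreeOf 0 q := by
          rw [degreeOf_eq_sup]; exact Finset.le_sup (f := fun m : Fin 2 →₀ ℕ => m 0) hm
        have hm1 : m 1 ≤ degreeOf 1 q := by
          rw [degreeOf_eq_sup]; exact Finset.le_sup (f := fun m : Fin 2 →₀ ℕ => m 1) hm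
        fin_cases x <;> simp <;> omega
      omega
    set q' := rename (Equiv.swap (0:Fin 2) 1) q with hq'
    have hd : degreeOf 0 q' = degreeOf 1 q := by
      have := degreeOf_rename_of_injective (f := ⇑(Equiv.swap (0:Fin 2) 1))
        (Equiv.injective _) (p := q) 1
      simpa [hq'] using this
    obtain ⟨p, hp0, hp⟩ := exists_root_of_degreeOf0 (by rw [hd]; exact h1)
    refine ⟨p ∘ Equiv.swap (0:Fin 2) 1, ?_, ?_⟩
    · intro h
      apply hp0
      funext i
      have := congrFun h ((Equiv.swap (0:Fin 2) 1) i)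
      simpa using this
    · rw [hq', eval_rename] at hp
      exact hp


lemma dmem_zero (f : Rc) : Dmem f 0 := ⟨0, by simp⟩

lemma dmem_add {f a b : Rc} (ha : Dmem f a) (hb : Dmem f b) : Dmem f (a + b) := by
  obtain ⟨g, rfl⟩ := ha; obtain ⟨g', rfl⟩ := hb
  exact ⟨g + g', by simp only [map_add]; ring⟩

lemma dmem_Cmul {f a : Rc} (c : ℂ) (ha : Dmem f a) : Dmem f (C c * a) := by
  obtain ⟨g, rfl⟩ := ha
  exact ⟨C c * g, by simp only [pderiv_C_mul]; ring⟩

lemma dmem_sum {f : Rc} {ι : Type*} (s : Finset ι) (F : ι → Rc)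
    (h : ∀ i ∈ s, Dmem f (F i)) : Dmem f (∑ i ∈ s, F i) := by
  classical
  induction s using Finset.induction_on with
  | empty => simpa using dmem_zero f
  | insert _ _ hx ih =>
      rw [Finset.sum_insert hx]
      exact dmem_add (h _ (Finset.mem_insert_self _ _))
        (ih fun i hi => h i (Finset.mem_insert_of_mem hi))

/-- The image `D_f` is graded: homogeneous components of its elements lie in it. -/
lemma dmem_homogeneousComponent {f : Rc} {d : ℕ} (hf : f.IsHomogeneous d) {w : Rc}
    (hw : Dmem f w) (k : ℕ) : Dmem f (homogeneousComponent k w) := by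
  obtain ⟨h, rfl⟩ := hw
  have hdecomp : pderiv 0 f * pderiv 1 h - pderiv 1 f * pderiv 0 h
      = ∑ e ∈ Finset.range (h.totalDegree + 1),
          (pderiv 0 f * pderiv 1 (homogeneousComponent e h)
            - pderiv 1 f * pderiv 0 (homogeneousComponent e h)) := by
    conv_lhs => rw [← sum_homogeneousComponent h]
    rw [map_sum, map_sum, Finset.mul_sum, Finset.mul_sum, ← Finset.sum_sub_distrib]
  rw [hdecomp, map_sum]
  apply dmem_sum
  intro e _
  rcases Nat.eq_zero_or_pos e with rfl | he
  · rw [homogeneousComponent_zero, pderiv_C, pderiv_C]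
    simpa using dmem_zero f
  · have hterm : (pderiv 0 f * pderiv 1 (homogeneousComponent e h)
        - pderiv 1 f * pderiv 0 (homogeneousComponent e h)).IsHomogeneous (d - 1 + (e - 1)) := by
      exact ((pderiv_isHomogeneous hf 0).mul
        (pderiv_isHomogeneous (homogeneousComponent_isHomogeneous e h) 1)).sub
        ((pderiv_isHomogeneous hf 1).mul
          (pderiv_isHomogeneous (homogeneousComponent_isHomogeneous e h) 0))
    rw [homogeneousComponent_of_mem (mem_homogeneousSubmodule _ _ |>.2 hterm)]
    split_ifs with hk
    · exact ⟨homogeneousComponent e h, rfl⟩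
    · exact dmem_zero f

lemma mul_homogComponent {r u : Rc} {k : ℕ} (hr : r.IsHomogeneous k) {m : ℕ}
    (hm : m ∈ Finset.range (u.totalDegree + 1)) :
    r * homogeneousComponent m u = homogeneousComponent (k + m) (r * u) := by
  conv_rhs => rw [← sum_homogeneousComponent u, Finset.mul_sum, map_sum]
  rw [Finset.sum_congr rfl (fun e (he : e ∈ Finset.range (u.totalDegree + 1)) => by
    rw [homogeneousComponent_of_mem ((mem_homogeneousSubmodule _ _).2
      (hr.mul (homogeneousComponent_isHomogeneous e u)))])]
  simp only [add_right_inj]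
  rw [Finset.sum_ite_eq (Finset.range (u.totalDegree + 1)) m
    (fun e => r * homogeneousComponent e u), if_pos hm]

lemma step {f : Rc} {d : ℕ} (hf : f.IsHomogeneous d)
    (hfy : pderiv 1 f ≠ 0)
    (hrel : IsRelPrime (pderiv 1 f) (pderiv 0 f))
    {w : Rc} {m : ℕ} (hw : w.IsHomogeneous m)
    (h : Rc) (heq : f * w = pderiv 0 f * pderiv 1 h - pderiv 1 f * pderiv 0 h) :
    Dmem f w := by
  have eulf := euler hf
  have eulw := euler hw
  have key : pderiv 1 f * (-(C (d:ℂ)) * pderiv 0 h - X 1 * w)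
      = pderiv 0 f * (X 0 * w - C (d:ℂ) * pderiv 1 h) := by
    linear_combination - w * eulf - C (d:ℂ) * heq
  have hdvd : pderiv 1 f ∣ X 0 * w - C (d:ℂ) * pderiv 1 h :=
    hrel.dvd_of_dvd_mul_left ⟨_, key.symm⟩
  obtain ⟨u, hu⟩ := hdvd
  have hu2 : -(C (d:ℂ)) * pderiv 0 h - X 1 * w = pderiv 0 f * u := by
    apply mul_left_cancel₀ hfy
    rw [key, hu]; ring
  have e1 := congrArg (pderiv 0) hu
  have e2 := congrArg (pderiv 1) hu2
  simp only [map_sub, map_neg, pderiv_mul, pderiv_C_mul, pderiv_C, pderiv_X_self,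
    pderiv_X_of_ne (show (0:Fin 2) ≠ 1 by decide),
    pderiv_X_of_ne (show (1:Fin 2) ≠ 0 by decide), zero_mul, mul_zero, zero_add, add_zero,
    one_mul] at e1 e2
  have hcomm := pderiv_comm h
  have hcommf := pderiv_comm f
  have hm2 : ((m:ℂ) + 2) ≠ 0 := by
    have h2 : ((m + 2 : ℕ) : ℂ) ≠ 0 := Nat.cast_ne_zero.2 (by omega)
    push_cast at h2; exact h2
  have hfin : (C (m:ℂ) + 2) * w
      = pderiv 1 f * pderiv 0 u - pderiv 0 f * pderiv 1 u := by
    linear_combination e1 - e2 - eulw + C (d:ℂ) * hcomm + u * hcommf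
  have hCC : C (((m:ℂ) + 2)⁻¹) * (C (m:ℂ) + 2) = (1 : Rc) := by
    have : (C (m:ℂ) + 2 : Rc) = C ((m:ℂ) + 2) := by
      rw [map_add, map_ofNat]
    rw [this, ← map_mul, inv_mul_cancel₀ hm2, map_one]
  refine ⟨ - (C (((m:ℂ) + 2)⁻¹)) * u, ?_⟩
  simp only [map_neg, pderiv_C_mul, mul_neg, neg_mul]
  linear_combination C (((m:ℂ) + 2)⁻¹) * hfin - w * hCC

lemma fin2_one_eq_succ : (1 : Fin 2) = Fin.succ 0 := rfl

lemma fse_X1 : finSuccEquiv ℂ 1 (X 1 : Rc) = Polynomial.C (X 0) := by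
  rw [fin2_one_eq_succ, finSuccEquiv_X_succ]

lemma linear_factor_aux {u : Rc} {e : ℕ} (hu : u.IsHomogeneous e) {p : Fin 2 → ℂ}
    (hb : p 1 ≠ 0) (hz : eval p u = 0) :
    (C (p 1) * X 0 - C (p 0) * X 1) ∣ u := by
  set c : ℂ := p 0 / p 1 with hc
  have hc1 : eval ![c, 1] u = 0 := by
    have hev := eval_smul_homog hu (p 1) ![c, 1]
    have hsp : (p 1) • ![c, 1] = p := by
      funext i
      fin_cases i <;> simp [hc] <;> field_simp
    rw [hsp, hz] at hev
    rcases mul_eq_zero.1 hev.symm with h | h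
    · exact absurd h (pow_ne_zero e hb)
    · exact h
  set A : MvPolynomial (Fin 1) ℂ := C c * X 0 with hA
  -- `Polynomial.eval A ∘ finSuccEquiv` is substitution of `(A, X 0)`
  have hpsi : (Polynomial.evalRingHom A).comp
        ((finSuccEquiv ℂ 1 : Rc ≃ₐ[ℂ] Polynomial (MvPolynomial (Fin 1) ℂ)) :
          Rc →+* Polynomial (MvPolynomial (Fin 1) ℂ))
      = ((aeval ![A, X 0] : Rc →ₐ[ℂ] MvPolynomial (Fin 1) ℂ) :
          Rc →+* MvPolynomial (Fin 1) ℂ) := by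
    apply MvPolynomial.ringHom_ext
    · intro a
      simp [finSuccEquiv_apply]
    · intro i
      refine Fin.cases ?_ (fun j => ?_) i
      · simp [finSuccEquiv_X_zero]
      · simp [fse_X1, Subsingleton.elim j (0 : Fin 1)]
  have hroot : Polynomial.eval A (finSuccEquiv ℂ 1 u) = 0 := by
    have h1 : Polynomial.eval A (finSuccEquiv ℂ 1 u) = aeval ![A, X 0] u := by
      have := congrArg (fun F : Rc →+* MvPolynomial (Fin 1) ℂ => F u) hpsi
      simpa using this
    rw [h1]
    -- show the substituted polynomial vanishes identically
    have hzero : ∀ x : Fin 1 → ℂ, eval x (aeval ![A, X 0] u) = eval x 0 := by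
      intro x
      rw [map_zero]
      rw [aeval_def, eval₂_comp_left (eval x) (algebraMap ℂ (MvPolynomial (Fin 1) ℂ))
        (![A, X 0]) u]
      have hid : (eval x).comp (algebraMap ℂ (MvPolynomial (Fin 1) ℂ)) = RingHom.id ℂ := by
        ext r; simp
      have hfun : (⇑(eval x) ∘ ![A, X 0]) = (x 0 • ![c, 1] : Fin 2 → ℂ) := by
        funext i
        fin_cases i <;> simp [hA] <;> ring
      rw [hid, hfun, eval₂_id, eval_smul_homog hu, hc1, mul_zero]
    exact MvPolynomial.funext hzero
  have hdvd1 : (Polynomial.X - Polynomial.C A) ∣ finSuccEquiv ℂ 1 u :=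
    Polynomial.dvd_iff_isRoot.2 hroot
  obtain ⟨Q, hQ⟩ := hdvd1
  have hback := congrArg (finSuccEquiv ℂ 1).symm hQ
  rw [AlgEquiv.symm_apply_apply, map_mul, map_sub] at hback
  have hX : (finSuccEquiv ℂ 1).symm Polynomial.X = (X 0 : Rc) := by
    rw [← finSuccEquiv_X_zero (R := ℂ) (n := 1), AlgEquiv.symm_apply_apply]
  have hCA : (finSuccEquiv ℂ 1).symm (Polynomial.C A) = C c * X 1 := by
    rw [AlgEquiv.symm_apply_eq]
    conv_rhs => rw [map_mul, fse_X1]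
    rw [hA, map_mul]
    simp [finSuccEquiv_apply]
  rw [hX, hCA] at hback
  -- now (X 0 - C c * X 1) ∣ u ; scale by the unit `C (p 1)`
  have hp0 : (C (p 0) : Rc) = C (p 1) * C c := by
    rw [← map_mul]; congr 1; rw [hc]; field_simp
  have hC : (C (p 1) : Rc) * C ((p 1)⁻¹) = 1 := by
    rw [← map_mul, mul_inv_cancel₀ hb, map_one]
  refine ⟨C ((p 1)⁻¹) * (finSuccEquiv ℂ 1).symm Q, ?_⟩
  linear_combination hback - ((X 0 - C c * X 1) * ((finSuccEquiv ℂ 1).symm Q)) * hC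
    + (C ((p 1)⁻¹) * ((finSuccEquiv ℂ 1).symm Q) * X 1) * hp0


lemma pderiv_l0 (a b : ℂ) : pderiv 0 (C b * X 0 - C a * X 1 : Rc) = C b := by
  simp [pderiv_C_mul, pderiv_X_self, pderiv_X_of_ne (show (1:Fin 2) ≠ 0 by decide)]

lemma pderiv_l1 (a b : ℂ) : pderiv 1 (C b * X 0 - C a * X 1 : Rc) = -C a := by
  simp [pderiv_C_mul, pderiv_X_self, pderiv_X_of_ne (show (0:Fin 2) ≠ 1 by decide)]

lemma torsion_identity (a b : ℂ) (u : Rc) (n : ℕ) :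
    pderiv 0 ((C b * X 0 - C a * X 1)^n * u) * pderiv 1 ((C b * X 0 - C a * X 1) * u)
      - pderiv 1 ((C b * X 0 - C a * X 1)^n * u) * pderiv 0 ((C b * X 0 - C a * X 1) * u)
    = C ((n:ℂ) - 1) *
        ((C b * X 0 - C a * X 1)^n * u * (C b * pderiv 1 u + C a * pderiv 0 u)) := by
  set l : Rc := C b * X 0 - C a * X 1 with hl
  have h0 : pderiv 0 l = C b := pderiv_l0 a b
  have h1 : pderiv 1 l = -C a := pderiv_l1 a b
  rcases n with _ | n'
  · simp only [pow_zero, one_mul, Nat.cast_zero, zero_sub]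
    rw [show C (-1 : ℂ) = (-1 : Rc) by rw [map_neg, map_one]]
    simp only [pderiv_mul, h0, h1]
    ring
  · simp only [pderiv_mul, pderiv_pow, h0, h1, Nat.add_sub_cancel]
    rw [show ((n' + 1 : ℕ) : ℂ) - 1 = (n' : ℂ) by push_cast; ring,
      show (C ((n' : ℂ)) : Rc) = ((n' : ℕ) : Rc) from C_eq_coe_nat n',
      show ((n' + 1 : ℕ) : Rc) = ((n' : ℕ) : Rc) + 1 by push_cast; ring]
    ring


lemma linear_factor {u : Rc} {e : ℕ} (hu : u.IsHomogeneous e) {p : Fin 2 → ℂ}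
    (hp : p ≠ 0) (hz : eval p u = 0) :
    (C (p 1) * X 0 - C (p 0) * X 1) ∣ u := by
  by_cases hb : p 1 ≠ 0
  · exact linear_factor_aux hu hb hz
  · push_neg at hb
    have ha : p 0 ≠ 0 := by
      intro ha
      apply hp; funext i; fin_cases i <;> simp [ha, hb]
    set sw : Fin 2 → Fin 2 := ⇑(Equiv.swap (0:Fin 2) 1) with hsw
    set u' := rename sw u with hu'
    have hu'h : u'.IsHomogeneous e := hu.rename_isHomogeneous
    set q : Fin 2 → ℂ := p ∘ sw with hq
    have hq1 : q 1 ≠ 0 := by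
      simpa [hq, hsw] using ha
    have hzq : eval q u' = 0 := by
      rw [hu', eval_rename]
      have hqq : q ∘ sw = p := by
        funext i; simp [hq, hsw]
      rw [hqq, hz]
    obtain ⟨v, hv⟩ := linear_factor_aux hu'h hq1 hzq
    have happ := congrArg (rename sw) hv
    rw [hu', rename_rename] at happ
    have hswsw : (sw ∘ sw) = id := by funext i; simp [hsw]
    rw [hswsw, rename_id, AlgHom.id_apply] at happ
    simp only [map_mul, map_sub, rename_C, rename_X] at happ
    have h0 : sw 0 = 1 := Equiv.swap_apply_left 0 1
    have h1 : sw 1 = 0 := Equiv.swap_apply_right 0 1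
    have hq1v : q 1 = p 0 := by simp [hq, hsw]
    have hq0v : q 0 = p 1 := by simp [hq, hsw]
    rw [h0, h1, hq1v, hq0v] at happ
    refine ⟨-(rename sw v), ?_⟩
    rw [happ]; ring


lemma homog_of_mul {r u : Rc} {n k : ℕ} (hru : (r * u).IsHomogeneous n)
    (hr : r.IsHomogeneous k) (hr0 : r ≠ 0) (hu0 : u ≠ 0) :
    ∃ e, u.IsHomogeneous e ∧ k + e = n := by
  have hcomp : ∀ m ∈ Finset.range (u.totalDegree + 1),
      r * homogeneousComponent m u = if k + m = n then r * u else 0 := by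
    intro m hm
    rw [mul_homogComponent hr hm,
      homogeneousComponent_of_mem ((mem_homogeneousSubmodule _ _).2 hru)]
  obtain ⟨m₀, hm₀r, hm₀⟩ : ∃ m ∈ Finset.range (u.totalDegree + 1),
      homogeneousComponent m u ≠ 0 := by
    by_contra hall; push_neg at hall
    apply hu0
    conv_lhs => rw [← sum_homogeneousComponent u]
    exact Finset.sum_eq_zero hall
  have hkm : k + m₀ = n := by
    by_contra hne
    have h := hcomp m₀ hm₀r
    rw [if_neg hne] at h
    exact hm₀ ((mul_eq_zero.1 h).resolve_left hr0)
  refine ⟨m₀, ?_, hkm⟩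
  have huu : u = homogeneousComponent m₀ u := by
    conv_lhs => rw [← sum_homogeneousComponent u]
    rw [Finset.sum_eq_single m₀]
    · intro m hm hne
      have h := hcomp m hm
      rw [if_neg (by omega)] at h
      exact (mul_eq_zero.1 h).resolve_left hr0
    · intro hnot
      exact absurd hm₀r hnot
  rw [huu]
  exact homogeneousComponent_isHomogeneous m₀ u

lemma not_dmem {f w : Rc} {p : Fin 2 → ℂ} (hpx : eval p (pderiv 0 f) = 0)
    (hpy : eval p (pderiv 1 f) = 0) (hw : eval p w ≠ 0) : ¬ Dmem f w := by
  rintro ⟨g, rfl⟩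
  apply hw
  rw [map_sub, map_mul, map_mul, hpx, hpy, zero_mul, zero_mul, sub_zero]

lemma forward {f : Rc} {d : ℕ} (hd : 1 < d) (hf : f.IsHomogeneous d) {p : Fin 2 → ℂ}
    (hp : p ≠ 0) (hpx : eval p (pderiv 0 f) = 0) (hpy : eval p (pderiv 1 f) = 0) :
    ∃ g : Rc, Dmem f (f ^ 1 * g) ∧ ¬ Dmem f g := by
  set a : ℂ := p 0 with ha'
  set b : ℂ := p 1 with hb'
  set l : Rc := C b * X 0 - C a * X 1 with hl
  have hlp : eval p l = 0 := by
    rw [hl]; simp [ha', hb']; ring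
  have hab : a ≠ 0 ∨ b ≠ 0 := by
    by_contra hcon
    push_neg at hcon
    apply hp; funext i; fin_cases i <;> simp [ha', hb'] at * <;> tauto
  rcases eq_or_ne f 0 with rfl | hf0
  · refine ⟨1, ?_, ?_⟩
    · rw [pow_one, zero_mul]; exact dmem_zero 0
    · exact not_dmem hpx hpy (by simp)
  -- l is not a unit
  have hlu : ¬ IsUnit l := by
    intro hU
    have hdvd1 : l ∣ (1 : Rc) := hU.dvd
    obtain ⟨r, hr⟩ := hdvd1
    have := congrArg (eval p) hr
    rw [map_one, map_mul, hlp, zero_mul] at this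
    exact one_ne_zero this
  obtain ⟨n, u, hnd, hfe⟩ := WfDvdMonoid.max_power_factor' hf0 hlu
  have hu0 : u ≠ 0 := by
    rintro rfl; rw [mul_zero] at hfe; exact hf0 hfe
  have hl0 : l ≠ 0 := by
    intro h
    rcases hab with h1 | h1
    · have := congrArg (eval ![0, 1]) h
      rw [hl] at this; simp at this; exact h1 this
    · have := congrArg (eval ![1, 0]) h
      rw [hl] at this; simp at this; exact h1 this
  have hlh : l.IsHomogeneous 1 := by
    rw [hl]
    exact (isHomogeneous_C_mul_X b 0).sub (isHomogeneous_C_mul_X a 1)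
  have hlnh : (l ^ n).IsHomogeneous n := by
    simpa using hlh.pow n
  obtain ⟨e, hue, hned⟩ : ∃ e, u.IsHomogeneous e ∧ n + e = d := by
    apply homog_of_mul (n := d) _ hlnh (pow_ne_zero n hl0) hu0
    rw [← hfe]; exact hf
  have hup : eval p u ≠ 0 := by
    intro h
    exact hnd (linear_factor hue hp h)
  have hple0 : pderiv 0 l = C b := by rw [hl]; exact pderiv_l0 a b
  have hple1 : pderiv 1 l = -C a := by rw [hl]; exact pderiv_l1 a b
  have hn1 : n ≠ 1 := by
    intro hn
    subst hn
    rw [pow_one] at hfe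
    have hx := hpx
    have hy := hpy
    rw [hfe, pderiv_mul, hple0] at hx
    rw [hfe, pderiv_mul, hple1] at hy
    rw [map_add, map_mul, map_mul, hlp, zero_mul, add_zero, eval_C] at hx
    rw [map_add, map_mul, map_mul, hlp, zero_mul, add_zero, map_neg, eval_C] at hy
    rcases hab with h1 | h1
    · rw [neg_mul] at hy
      exact hup (by
        have := neg_eq_zero.1 hy
        exact (mul_eq_zero.1 this).resolve_left h1)
    · exact hup ((mul_eq_zero.1 hx).resolve_left h1)
  have hd0 : ((d:ℂ)) ≠ 0 := Nat.cast_ne_zero.2 (by omega)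
  rcases Nat.eq_zero_or_pos e with he0 | hep
  -- constant cofactor : f = C c * l ^ d
  · subst he0
    have hnd' : n = d := by omega
    have hut : u.totalDegree = 0 := hue.totalDegree hu0
    have hcu : u = C (coeff 0 u) := eq_C_of_totalDegree_eq_zero hut
    obtain ⟨d', rfl⟩ : ∃ d', n = d' + 1 := ⟨n - 1, by omega⟩
    have hn0 : (((d' + 1 : ℕ):ℂ)) ≠ 0 := Nat.cast_ne_zero.2 (by omega)
    -- choose the auxiliary polynomial
    have key : ∃ h₀ : Rc, C b * pderiv 1 h₀ + C a * pderiv 0 h₀ = C (((d' + 1 : ℕ):ℂ))⁻¹ * l := by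
      rcases eq_or_ne a 0 with haz | haz
      · refine ⟨C (((d' + 1 : ℕ):ℂ))⁻¹ * (X 0 * X 1), ?_⟩
        rw [hl, haz]
        simp only [pderiv_C_mul, pderiv_C, pderiv_mul, pderiv_X_self,
          pderiv_X_of_ne (show (0:Fin 2) ≠ 1 by decide),
          pderiv_X_of_ne (show (1:Fin 2) ≠ 0 by decide), map_zero]
        ring
      · refine ⟨C (b/(a*((d' + 1 : ℕ):ℂ))) * (X 0 * X 0)
          - C (((d' + 1 : ℕ):ℂ))⁻¹ * (X 0 * X 1), ?_⟩
        have hrw : (b/(a*((d' + 1 : ℕ):ℂ))) = b * a⁻¹ * (((d' + 1 : ℕ):ℂ))⁻¹ := by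
          rw [div_eq_mul_inv, mul_inv]; ring
        have hCa : (C a : Rc) * C (a⁻¹) = 1 := by
          rw [← map_mul, mul_inv_cancel₀ haz, map_one]
        rw [hl, hrw, map_mul, map_mul]
        simp only [map_sub, pderiv_C_mul, pderiv_C, pderiv_mul, pderiv_X_self,
          pderiv_X_of_ne (show (0:Fin 2) ≠ 1 by decide),
          pderiv_X_of_ne (show (1:Fin 2) ≠ 0 by decide)]
        linear_combination (2 * C b * C (((d' + 1 : ℕ):ℂ))⁻¹ * X 0) * hCa
    obtain ⟨h₀, hkey⟩ := key
    have hdd : ((d' + 1 : ℕ) : Rc) * C (((d' + 1 : ℕ):ℂ))⁻¹ = 1 := by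
      rw [← C_eq_coe_nat, ← map_mul, mul_inv_cancel₀ hn0, map_one]
    refine ⟨1, ⟨h₀, ?_⟩, not_dmem hpx hpy (by simp)⟩
    rw [pow_one, mul_one, hfe]
    have hpd0 : pderiv 0 (l ^ (d' + 1) * u)
        = ((d' + 1 : ℕ) : Rc) * l ^ d' * C b * u := by
      conv_lhs => rw [hcu]
      rw [pderiv_mul, pderiv_C, mul_zero, add_zero, pderiv_pow, hple0,
        Nat.add_sub_cancel, ← hcu]
    have hpd1 : pderiv 1 (l ^ (d' + 1) * u)
        = -(((d' + 1 : ℕ) : Rc) * l ^ d' * C a * u) := by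
      conv_lhs => rw [hcu]
      rw [pderiv_mul, pderiv_C, mul_zero, add_zero, pderiv_pow, hple1,
        Nat.add_sub_cancel, ← hcu]
      ring
    rw [hpd0, hpd1]
    linear_combination (-(((d' + 1 : ℕ) : Rc)) * l ^ d' * u) * hkey
      - (l ^ (d' + 1) * u) * hdd
  -- nonconstant cofactor
  · set g : Rc := C b * pderiv 1 u + C a * pderiv 0 u with hg
    have hcn1 : ((n:ℂ) - 1) ≠ 0 := by
      intro h
      apply hn1
      have h1 : (n:ℂ) = ((1:ℕ):ℂ) := by push_cast; linear_combination h
      exact Nat.cast_injective h1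
    have hCC : C (((n:ℂ) - 1)⁻¹) * C ((n:ℂ) - 1) = (1:Rc) := by
      rw [← map_mul, inv_mul_cancel₀ hcn1, map_one]
    refine ⟨g, ⟨C (((n:ℂ) - 1)⁻¹) * (l * u), ?_⟩, ?_⟩
    · have hti := torsion_identity a b u n
      rw [← hl] at hti
      rw [pow_one, hfe]
      simp only [pderiv_C_mul]
      linear_combination - C (((n:ℂ) - 1)⁻¹) * hti - ((l ^ n * u) * g) * hCC
    · apply not_dmem hpx hpy
      have heu := congrArg (eval p) (euler hue)
      rw [map_add, map_mul, map_mul, map_mul, eval_C, eval_X, eval_X] at heu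
      rw [hg, map_add, map_mul, map_mul, eval_C, eval_C]
      intro hzero
      have : (e:ℂ) * eval p u = 0 := by
        rw [← heu, ← ha', ← hb']
        linear_combination hzero
      rcases mul_eq_zero.1 this with h | h
      · exact (Nat.cast_ne_zero.2 (by omega) : (e:ℂ) ≠ 0) h
      · exact hup h

theorem backward {f : Rc} {d : ℕ} (hd : 1 < d) (hf : f.IsHomogeneous d)
    (hiso : ∀ p : Fin 2 → ℂ, eval p (pderiv 0 f) = 0 → eval p (pderiv 1 f) = 0 → p = 0) :
    ∀ (g : Rc) (k : ℕ), Dmem f (f ^ k * g) → Dmem f g := by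
  have hone : (![1, 1] : Fin 2 → ℂ) ≠ 0 := by
    intro h
    have := congrFun h 0
    simp at this
  have hnz : ∀ q : Rc, q.IsHomogeneous (d - 1) → q ≠ 0 →
      (∃ p : Fin 2 → ℂ, p ≠ 0 ∧ eval p q = 0) := by
    intro q hq hq0
    apply exists_nonzero_root
    rw [hq.totalDegree hq0]
    omega
  have hfy : pderiv 1 f ≠ 0 := by
    intro h0
    by_cases hx0 : pderiv 0 f = 0
    · have := hiso ![1, 1] (by rw [hx0, map_zero]) (by rw [h0, map_zero])
      exact hone this
    · obtain ⟨p, hp0, hp⟩ := hnz _ (pderiv_isHomogeneous hf 0) hx0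
      exact hp0 (hiso p hp (by rw [h0, map_zero]))
  have hfx : pderiv 0 f ≠ 0 := by
    intro h0
    obtain ⟨p, hp0, hp⟩ := hnz _ (pderiv_isHomogeneous hf 1) hfy
    exact hp0 (hiso p (by rw [h0, map_zero]) hp)
  have hrel : IsRelPrime (pderiv 1 f) (pderiv 0 f) := by
    intro q hq1 hq0
    by_contra hqU
    have hq0' : q ≠ 0 := by
      rintro rfl
      exact hfy (zero_dvd_iff.1 hq1)
    have hqt : 1 ≤ q.totalDegree := by
      by_contra ht
      push_neg at ht
      have h0 : q.totalDegree = 0 := by omega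
      have := eq_C_of_totalDegree_eq_zero h0
      apply hqU
      rw [this]
      refine IsUnit.map (C : ℂ →+* Rc) (isUnit_iff_ne_zero.2 ?_)
      intro hc
      apply hq0'
      rw [this, hc, map_zero]
    obtain ⟨p, hp0, hp⟩ := exists_nonzero_root hqt
    have hev1 : eval p (pderiv 1 f) = 0 := by
      obtain ⟨t, ht⟩ := hq1
      rw [ht, map_mul, hp, zero_mul]
    have hev0 : eval p (pderiv 0 f) = 0 := by
      obtain ⟨t, ht⟩ := hq0
      rw [ht, map_mul, hp, zero_mul]
    exact hp0 (hiso p hev0 hev1)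
  have hmul : ∀ g : Rc, Dmem f (f * g) → Dmem f g := by
    intro g hD
    have hsum : g = ∑ m ∈ Finset.range (g.totalDegree + 1), homogeneousComponent m g :=
      (sum_homogeneousComponent g).symm
    rw [hsum]
    apply dmem_sum
    intro m hm
    have hfgm : f * homogeneousComponent m g = homogeneousComponent (d + m) (f * g) :=
      mul_homogComponent hf hm
    have hDm : Dmem f (f * homogeneousComponent m g) := by
      rw [hfgm]
      exact dmem_homogeneousComponent hf hD (d + m)
    obtain ⟨h', hh'⟩ := hDm
    exact step hf hfy hrel (homogeneousComponent_isHomogeneous m g) h' hh'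
  intro g k
  induction k generalizing g with
  | zero => intro h; simpa using h
  | succ k ih =>
      intro h
      apply hmul
      apply ih
      have hre : f ^ k * (f * g) = f ^ (k + 1) * g := by ring
      rw [hre]
      exact h


end

end Brisk

/-- For `f ∈ ℂ[x,y]` homogeneous of degree `d > 1`, the Brieskorn module
`B(f) = ℂ[x,y]/D_f` is torsion free over `ℂ[t]` (with `t` acting by multiplication by `f`)
iff `f` has an isolated singularity at the origin. -/
theorem statement5 (f : MvPolynomial (Fin 2) ℂ) (d : ℕ) (hd : 1 < d)
    (hf : f.IsHomogeneous d) :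
    (∀ (g : MvPolynomial (Fin 2) ℂ) (k : ℕ), 1 ≤ k → Dmem f (f ^ k * g) → Dmem f g) ↔
      (∀ p : Fin 2 → ℂ, eval p (pderiv 0 f) = 0 → eval p (pderiv 1 f) = 0 → p = 0) := by
  constructor
  · intro Htf p hpx hpy
    by_contra hp
    obtain ⟨g, hg1, hg2⟩ := Brisk.forward hd hf hp hpx hpy
    exact hg2 (Htf g 1 le_rfl hg1)
  · intro hiso g k _ hDk
    exact Brisk.backward hd hf hiso g k hDk
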